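/- If a nondegenerate lattice W admits a primitive embedding into a unimodular lattice L (an injective map preserving the bilinear forms whose image is a primitive submodule of L), then rk W + ℓ(W) ≤ rk L, where ℓ(W) is the minimal number of generators of the discriminant group W*/W. -/

import Mathlib

noncomputable section

/-- If a nondegenerate lattice `W` admits a primitive embedding into a unimodular
lattice `L`, then `rk W + ℓ(W) ≤ rk L`, where `ℓ(W)` is the minimal number of
generators of the discriminant group `W*/W = coker(W → Hom(W, ℤ))`. -/
theorem statement17
    (W : Type*) [AddCommGroup W] [Module ℤ W] [Module.Free ℤ W] [Module.Finite ℤ W]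
    (L : Type*) [AddCommGroup L] [Module ℤ L] [Module.Free ℤ L] [Module.Finite ℤ L]
    (BW : W →ₗ[ℤ] W →ₗ[ℤ] ℤ) (hWsymm : ∀ x y : W, BW x y = BW y x)
    (hWnondeg : Function.Injective fun x : W => BW x)
    (BL : L →ₗ[ℤ] L →ₗ[ℤ] ℤ) (hLsymm : ∀ x y : L, BL x y = BL y x)
    (hLunimod : Function.Bijective fun x : L => BL x)
    (f : W →ₗ[ℤ] L) (hf : Function.Injective f)
    (hcompat : ∀ x y : W, BL (f x) (f y) = BW x y)
    (hprim : ∀ (n : ℤ) (x : L), n ≠ 0 → n • x ∈ LinearMap.range f →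
      x ∈ LinearMap.range f)
    (ell : ℕ)
    (hell : IsLeast {k : ℕ | ∃ g : Fin k → ((W →ₗ[ℤ] ℤ) ⧸ LinearMap.range BW),
      AddSubgroup.closure (Set.range g) = ⊤} ell) :
    Module.finrank ℤ W + ell ≤ Module.finrank ℤ L := by
  classical
  set R : Submodule ℤ L := LinearMap.range f with hR
  letI instQ : Module ℤ (L ⧸ R) := Submodule.Quotient.module R
  letI instP : Module ℤ (W × (L ⧸ R)) := Prod.instModule
  -- the quotient L / f(W) is torsion-free, hence free
  haveI : Module.Finite ℤ (L ⧸ R) := Module.Finite.of_surjective R.mkQ R.mkQ_surjective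
  letI iS : SMul ℤ (L ⧸ R) :=
    @SMulZeroClass.toSMul ℤ (L ⧸ R) _ (@SMulWithZero.toSMulZeroClass ℤ (L ⧸ R) _ _
      (@MulActionWithZero.toSMulWithZero ℤ (L ⧸ R) _ _
        (@Module.toMulActionWithZero ℤ (L ⧸ R) _ _ instQ)))
  haveI hQtf : @NoZeroSMulDivisors ℤ (L ⧸ R) _ _ iS := by
    refine @NoZeroSMulDivisors.mk ℤ (L ⧸ R) _ _ iS ?_
    intro n q hnq
    by_cases hn : n = 0
    · exact Or.inl hn
    · right
      obtain ⟨x, rfl⟩ := R.mkQ_surjective q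
      have hmemR : n • x ∈ R := by
        rw [← Submodule.Quotient.mk_eq_zero R, ← Int.cast_smul_eq_zsmul ℤ n x,
          Int.cast_id]
        exact hnq
      rw [Submodule.mkQ_apply, Submodule.Quotient.mk_eq_zero]
      exact hprim n x hn hmemR
  haveI : Module.Free ℤ (L ⧸ R) := Module.free_of_finite_type_torsion_free'
  -- a section of the quotient map
  obtain ⟨s, hs⟩ := Module.projective_lifting_property R.mkQ (LinearMap.id (M := L ⧸ R))
    R.mkQ_surjective
  have hms : ∀ q : L ⧸ R, R.mkQ (s q) = q := fun q => LinearMap.congr_fun hs q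
  -- L ≃ W × (L ⧸ R)
  let F : (W × (L ⧸ R)) →ₗ[ℤ] L :=
    f.comp (LinearMap.fst ℤ W (L ⧸ R)) + s.comp (LinearMap.snd ℤ W (L ⧸ R))
  have hFapp : ∀ a : W × (L ⧸ R), F a = f a.1 + s a.2 := fun a => rfl
  have hF : Function.Bijective F := by
    constructor
    · intro a b hab
      have hab' : f a.1 + s a.2 = f b.1 + s b.2 := by
        rw [← hFapp, ← hFapp, hab]
      have h2 : a.2 = b.2 := by
        have h := congrArg R.mkQ hab'
        rw [map_add, map_add, hms, hms] at h
        have ha0 : R.mkQ (f a.1) = 0 := by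
          rw [Submodule.mkQ_apply, Submodule.Quotient.mk_eq_zero]
          exact LinearMap.mem_range_self f a.1
        have hb0 : R.mkQ (f b.1) = 0 := by
          rw [Submodule.mkQ_apply, Submodule.Quotient.mk_eq_zero]
          exact LinearMap.mem_range_self f b.1
        rwa [ha0, hb0, zero_add, zero_add] at h
      have h1 : f a.1 = f b.1 := by
        rw [h2] at hab'
        exact add_right_cancel hab'
      exact Prod.ext (hf h1) h2
    · intro x
      have : x - s (R.mkQ x) ∈ R := by
        rw [← Submodule.Quotient.mk_eq_zero R]
        have : R.mkQ (x - s (R.mkQ x)) = 0 := by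
          rw [map_sub, hms, sub_self]
        simpa using this
      obtain ⟨w, hw⟩ := this
      refine ⟨(w, R.mkQ x), ?_⟩
      rw [hFapp]
      simp only
      rw [hw]
      abel
  have hrank : Module.finrank ℤ W + Module.finrank ℤ (L ⧸ R) = Module.finrank ℤ L := by
    rw [← Module.finrank_prod (R := ℤ) (M := W) (M' := L ⧸ R)]
    exact (LinearEquiv.ofBijective F hF).finrank_eq
  -- restriction map L → Hom(W, ℤ) is surjective
  let r : L →ₗ[ℤ] (W →ₗ[ℤ] ℤ) := (LinearMap.lcomp ℤ ℤ f).comp BL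
  have hrsurj : Function.Surjective r := by
    intro φ
    -- extend φ to L using the splitting
    let E := LinearEquiv.ofBijective F hF
    let p : L →ₗ[ℤ] W := (LinearMap.fst ℤ W (L ⧸ R)).comp (E.symm : L →ₗ[ℤ] (W × (L ⧸ R)))
    have hp : ∀ w : W, p (f w) = w := by
      intro w
      have hE : E.symm (f w) = (w, 0) := by
        apply E.injective
        rw [LinearEquiv.apply_symm_apply]
        show f w = F (w, 0)
        rw [hFapp]
        simp
      show (E.symm (f w)).1 = w
      rw [hE]
    obtain ⟨x, hx⟩ := hLunimod.2 (φ.comp p)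
    refine ⟨x, ?_⟩
    ext w
    have hx' : BL x = φ.comp p := hx
    show (BL x) (f w) = φ w
    rw [hx']
    show φ (p (f w)) = φ w
    rw [hp]
  -- the discriminant group is a quotient of L ⧸ R
  let θ : L →ₗ[ℤ] ((W →ₗ[ℤ] ℤ) ⧸ LinearMap.range BW) := (LinearMap.range BW).mkQ.comp r
  have hθker : R ≤ LinearMap.ker θ := by
    rintro _ ⟨w, rfl⟩
    have hrw : r (f w) = BW w := by
      ext y
      exact hcompat w y
    simp only [LinearMap.mem_ker, θ, LinearMap.comp_apply, hrw, Submodule.mkQ_apply,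
      Submodule.Quotient.mk_eq_zero]
    exact LinearMap.mem_range_self BW w
  let ψ : (L ⧸ R) →ₗ[ℤ] ((W →ₗ[ℤ] ℤ) ⧸ LinearMap.range BW) := R.liftQ θ hθker
  have hψsurj : Function.Surjective ψ := by
    intro d
    obtain ⟨φ, hφ⟩ := (LinearMap.range BW).mkQ_surjective d
    obtain ⟨x, hx⟩ := hrsurj φ
    refine ⟨R.mkQ x, ?_⟩
    show θ x = d
    rw [← hφ]
    show (LinearMap.range BW).mkQ (r x) = (LinearMap.range BW).mkQ φ
    rw [hx]
  -- generators of the discriminant group indexed by Fin (finrank (L ⧸ R))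
  set n := Module.finrank ℤ (L ⧸ R) with hn
  let b := Module.finBasis ℤ (L ⧸ R)
  have hmem : n ∈ {k : ℕ | ∃ g : Fin k → ((W →ₗ[ℤ] ℤ) ⧸ LinearMap.range BW),
      AddSubgroup.closure (Set.range g) = ⊤} := by
    refine ⟨fun i => ψ (b i), ?_⟩
    have hspan : Submodule.span ℤ (Set.range fun i => ψ (b i)) = ⊤ := by
      have hrg : Set.range (fun i => ψ (b i)) = ψ '' Set.range b := by
        rw [← Set.range_comp]; rfl
      rw [hrg, ← Submodule.map_span, b.span_eq, Submodule.map_top,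
        LinearMap.range_eq_top.mpr hψsurj]
    calc AddSubgroup.closure (Set.range fun i => ψ (b i))
        = (Submodule.span ℤ (Set.range fun i => ψ (b i))).toAddSubgroup := by
          rw [Submodule.span_int_eq_addSubgroupClosure]
      _ = ⊤ := by rw [hspan]; rfl
  have hle : ell ≤ n := hell.2 hmem
  omega
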